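/- arXiv:1511.06907 — 3 statements merged into one kernel-verified Lean document; each statement's English description precedes it below -/
import Mathlib

section
/- If (RG)^- is anticommutative and * ≠ Id on G, then for every x ∈ G with x^* = x there exists a nonzero α ∈ R such that αx ∈ (RG)^-. Specifically, α = 2 works when σ(x) = 1, and α = 1 - σ(x) works when σ(x) ≠ 1. -/
open Finsupp

/-- The generalized oriented map σ* on the group ring RG. -/
noncomputable def sigmaStar {R : Type} [CommRing R] {G : Type} [Group G]
    (inv : G → G) (σ : G →* Rˣ) (α : MonoidAlgebra R G) : MonoidAlgebra R G :=
  MonoidAlgebra.ofCoeff (α.coeff.sum fun x a => Finsupp.single (inv x) ((σ x : R) * a))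

/-- The set of skew-symmetric elements of RG under σ*. -/
def skewSet {R : Type} [CommRing R] {G : Type} [Group G]
    (inv : G → G) (σ : G →* Rˣ) : Set (MonoidAlgebra R G) :=
  {α | sigmaStar inv σ α = -α}

lemma sigmaStar_single {R : Type} [CommRing R] {G : Type} [Group G]
    (inv : G → G) (σ : G →* Rˣ) (x : G) (a : R) :
    sigmaStar inv σ (MonoidAlgebra.single x a) = MonoidAlgebra.single (inv x) ((σ x : R) * a) := by
  unfold sigmaStar
  rw [MonoidAlgebra.coeff_single, Finsupp.sum_single_index, MonoidAlgebra.ofCoeff_single]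
  simp

lemma sigmaStar_add {R : Type} [CommRing R] {G : Type} [Group G]
    (inv : G → G) (σ : G →* Rˣ) (α β : MonoidAlgebra R G) :
    sigmaStar inv σ (α + β) = sigmaStar inv σ α + sigmaStar inv σ β := by
  unfold sigmaStar
  rw [MonoidAlgebra.coeff_add, ← MonoidAlgebra.ofCoeff_add]
  exact congrArg MonoidAlgebra.ofCoeff
    (Finsupp.sum_add_index' (by simp) (by intros; rw [mul_add, Finsupp.single_add]))

theorem stmt6 {R : Type} [CommRing R] (hchar : ringChar R ≠ 2) {G : Type} [Group G]
    (inv : G → G) (hmul : ∀ x y : G, inv (x * y) = inv y * inv x)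
    (hinv : ∀ x : G, inv (inv x) = x) (hne : inv ≠ id) (σ : G →* Rˣ) (hnt : σ ≠ 1)
    (hcompat : ∀ x : G, x * inv x ∈ σ.ker)
    (hanti : ∀ α ∈ skewSet inv σ, ∀ β ∈ skewSet inv σ, α * β + β * α = 0) :
    ∀ x : G, inv x = x →
      ∃ α : R, α ≠ 0 ∧ (MonoidAlgebra.ofCoeff (Finsupp.single x α) : MonoidAlgebra R G) ∈ skewSet inv σ ∧
        ((σ x : R) = 1 → α = 2) ∧ ((σ x : R) ≠ 1 → α = 1 - (σ x : R)) := by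
  -- R is nontrivial
  have hR : Nontrivial R := by
    rcases subsingleton_or_nontrivial R with h | h
    · exact absurd (MonoidHom.ext fun g => Units.ext (Subsingleton.elim _ _)) hnt
    · exact h
  have h2ne : (2 : R) ≠ 0 := by
    intro h
    have hd : ringChar R ∣ 2 := (ringChar.spec R 2).mp (by exact_mod_cast h)
    rcases (Nat.dvd_prime Nat.prime_two).mp hd with h1 | h1
    · have := (ringChar.spec R 1).mpr (by rw [h1])
      simp at this
    · exact hchar h1
  -- obtain g with inv g ≠ g
  obtain ⟨g, hg⟩ : ∃ g, inv g ≠ g := by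
    by_contra h
    push_neg at h
    exact hne (funext h)
  set s : R := (σ g : R) with hs
  have hs1 : s * (σ (inv g) : R) = 1 := by
    have h := hcompat g
    rw [MonoidHom.mem_ker] at h
    have h2 : σ g * σ (inv g) = 1 := by rw [← map_mul]; exact h
    calc s * ((σ (inv g) : Rˣ) : R) = ((σ g * σ (inv g) : Rˣ) : R) := (Units.val_mul _ _).symm
      _ = 1 := by rw [h2, Units.val_one]
  -- the skew element u
  set u : MonoidAlgebra R G :=
    MonoidAlgebra.single g (1 : R) + MonoidAlgebra.single (inv g) (-s) with hu_def
  have hu : u ∈ skewSet inv σ := by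
    show sigmaStar inv σ u = -u
    rw [hu_def, sigmaStar_add, sigmaStar_single, sigmaStar_single, hinv]
    rw [mul_one, mul_neg]
    rw [show (σ (inv g) : R) * s = 1 from by rw [mul_comm]; exact hs1]
    rw [neg_add, ← MonoidAlgebra.single_neg, ← MonoidAlgebra.single_neg, neg_neg, add_comm]
  have hsq := hanti u hu u hu
  -- expand u * u
  have hexp : u * u =
      MonoidAlgebra.single (g * g) (1 : R) + MonoidAlgebra.single (g * inv g) (-s)
      + (MonoidAlgebra.single (inv g * g) (-s) + MonoidAlgebra.single (inv g * inv g) (s * s)) := by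
    rw [hu_def, add_mul, mul_add, mul_add]
    rw [MonoidAlgebra.single_mul_single, MonoidAlgebra.single_mul_single,
      MonoidAlgebra.single_mul_single, MonoidAlgebra.single_mul_single]
    ring_nf
  rw [hexp] at hsq
  have hsq' : (MonoidAlgebra.single (g * g) (1 : R) + MonoidAlgebra.single (g * inv g) (-s)
      + (MonoidAlgebra.single (inv g * g) (-s) + MonoidAlgebra.single (inv g * inv g) (s * s))
      + (MonoidAlgebra.single (g * g) (1 : R) + MonoidAlgebra.single (g * inv g) (-s)
      + (MonoidAlgebra.single (inv g * g) (-s) + MonoidAlgebra.single (inv g * inv g) (s * s)))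
      : MonoidAlgebra R G) = 0 := hsq
  have hcoef := congrArg (fun z : MonoidAlgebra R G => z.coeff (g * inv g)) hsq'
  have e1 : ¬ (g * g = g * inv g) := fun h => hg (mul_left_cancel h).symm
  have e2 : ¬ (inv g * inv g = g * inv g) := fun h => hg (mul_right_cancel h)
  have hsne : s ≠ 0 := fun h => by
    rw [h, zero_mul] at hs1; exact (zero_ne_one hs1)
  have h4 : (4 : R) = 0 := by
    by_cases e3 : inv g * g = g * inv g
    · rw [e3] at hcoef
      simp only [MonoidAlgebra.coeff_add, MonoidAlgebra.coeff_single, MonoidAlgebra.coeff_zero, Finsupp.add_apply, Finsupp.single_eq_of_ne' e1, Finsupp.single_eq_of_ne' e2,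
        Finsupp.single_eq_same, Finsupp.coe_zero, Pi.zero_apply] at hcoef
      have hs4 : s * 4 = 0 := by linear_combination -hcoef
      have h4' : (4 : R) = (σ (inv g) : R) * (s * 4) := by
        rw [← mul_assoc, mul_comm ((σ (inv g) : R)) s, hs1, one_mul]
      rw [hs4, mul_zero] at h4'
      exact h4'
    · simp only [MonoidAlgebra.coeff_add, MonoidAlgebra.coeff_single, MonoidAlgebra.coeff_zero, Finsupp.add_apply, Finsupp.single_eq_of_ne' e1, Finsupp.single_eq_of_ne' e2,
        Finsupp.single_eq_of_ne' e3, Finsupp.single_eq_same, Finsupp.coe_zero,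
        Pi.zero_apply] at hcoef
      have h2s : s * 2 = 0 := by linear_combination -hcoef
      have : (2 : R) = (σ (inv g) : R) * (s * 2) := by
        rw [← mul_assoc, mul_comm ((σ (inv g) : R)) s, hs1, one_mul]
      rw [h2s, mul_zero] at this
      exact absurd this h2ne
  -- now the main goal
  intro x hx
  have hxsq : (σ x : R) * (σ x : R) = 1 := by
    have h := hcompat x
    rw [MonoidHom.mem_ker, hx] at h
    have h2 : σ x * σ x = 1 := by rw [← map_mul]; exact h
    calc (σ x : R) * ((σ x : Rˣ) : R) = ((σ x * σ x : Rˣ) : R) := (Units.val_mul _ _).symm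
      _ = 1 := by rw [h2, Units.val_one]
  by_cases hσx : (σ x : R) = 1
  · refine ⟨2, h2ne, ?_, fun _ => rfl, fun h => absurd hσx h⟩
    show sigmaStar inv σ _ = _
    rw [MonoidAlgebra.ofCoeff_single, sigmaStar_single, hx, hσx, one_mul, ← MonoidAlgebra.single_neg]
    congr 1
    linear_combination h4
  · refine ⟨1 - (σ x : R), ?_, ?_, fun h => absurd h hσx, fun _ => rfl⟩
    · intro h
      apply hσx
      linear_combination -h
    · show sigmaStar inv σ _ = _
      rw [MonoidAlgebra.ofCoeff_single, sigmaStar_single, hx, ← MonoidAlgebra.single_neg]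
      congr 1
      linear_combination -hxsq
end

section
/- If (RG)^- is anticommutative and x, y ∈ G satisfy x^* ≠ x, y^* ≠ y, and y ∉ ker σ, then y^{-1}xy ∈ {x, x^*}. -/
open Finsupp

section Aux

variable {R : Type} [CommRing R] {G : Type} [Group G]

/-- Abbreviation for a single in the monoid algebra. -/
noncomputable def SS (g : G) (r : R) : MonoidAlgebra R G := MonoidAlgebra.single g r

theorem SS_mul (a b : G) (r s : R) : SS a r * SS b s = SS (a*b) (r*s) :=
  MonoidAlgebra.single_mul_single ..

theorem ss_SS (inv : G → G) (σ : G →* Rˣ) (g : G) (r : R) :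
    sigmaStar inv σ (SS g r) = SS (inv g) ((σ g : R) * r) :=
  congrArg MonoidAlgebra.ofCoeff (Finsupp.sum_single_index (by simp))

theorem ss_sub (inv : G → G) (σ : G →* Rˣ) (α β : MonoidAlgebra R G) :
    sigmaStar inv σ (α - β) = sigmaStar inv σ α - sigmaStar inv σ β :=
  congrArg MonoidAlgebra.ofCoeff (Finsupp.sum_sub_index (by intros; rw [mul_sub, Finsupp.single_sub]))

/-- δ_g = g - σ(g) g* is always skew. -/
theorem skew_delta (inv : G → G) (hinv : ∀ g : G, inv (inv g) = g) (σ : G →* Rˣ)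
    (hcompat : ∀ g : G, g * inv g ∈ σ.ker) (g : G) :
    (SS g 1 - SS (inv g) ((σ g : R))) ∈ skewSet inv σ := by
  have hker : (σ g : R) * (σ (inv g) : R) = 1 := by
    have h1 := hcompat g
    rw [MonoidHom.mem_ker] at h1
    have h2 : ((σ g * σ (inv g) : Rˣ) : R) = 1 := by rw [← map_mul σ, h1]; rfl
    simpa using h2
  show sigmaStar inv σ _ = _
  rw [ss_sub, ss_SS, ss_SS, hinv g, mul_one]
  have h3 : (σ (inv g) : R) * (σ g : R) = 1 := by rw [mul_comm]; exact hker
  rw [h3]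
  abel

/-- 2·g is skew whenever g is symmetric and 2σ(g) = -2. -/
theorem skew_two (inv : G → G) (σ : G →* Rˣ) (g : G) (hg : inv g = g)
    (hσ : (σ g : R) * 2 = -2) : (SS g (2:R)) ∈ skewSet inv σ := by
  show sigmaStar inv σ _ = _
  rw [ss_SS, hg, hσ, SS, SS, MonoidAlgebra.single_neg]

theorem expandP (a b c d : G) (p q u v : R) :
    (SS a p - SS b q) * (SS c u - SS d v)
      = SS (a*c) (p*u) - SS (a*d) (p*v) - SS (b*c) (q*u) + SS (b*d) (q*v) := by
  rw [sub_mul, mul_sub, mul_sub, SS_mul, SS_mul, SS_mul, SS_mul]; abel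

theorem expandL (a c d : G) (p u v : R) :
    SS a p * (SS c u - SS d v) = SS (a*c) (p*u) - SS (a*d) (p*v) := by
  rw [mul_sub, SS_mul, SS_mul]

theorem expandR (a c d : G) (p u v : R) :
    (SS c u - SS d v) * SS a p = SS (c*a) (u*p) - SS (d*a) (v*p) := by
  rw [sub_mul, SS_mul, SS_mul]


theorem MA_add_apply (A B : MonoidAlgebra R G) (g : G) : (A + B).coeff g = A.coeff g + B.coeff g := rfl

theorem MA_sub_apply (A B : MonoidAlgebra R G) (g : G) : (A - B).coeff g = A.coeff g - B.coeff g := rfl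

open Classical in
theorem SS_apply (a g : G) (r : R) : (SS a r).coeff g = if a = g then r else 0 := by
  classical exact Finsupp.single_apply

theorem coeff_zero {A : MonoidAlgebra R G} (h : A = 0) (g : G) : A.coeff g = 0 := by
  rw [h]; rfl

end Aux

theorem stmt9 {R : Type} [CommRing R] (hchar : ringChar R ≠ 2) {G : Type} [Group G]
    (inv : G → G) (hmul : ∀ x y : G, inv (x * y) = inv y * inv x)
    (hinv : ∀ x : G, inv (inv x) = x) (σ : G →* Rˣ) (hnt : σ ≠ 1)
    (hcompat : ∀ x : G, x * inv x ∈ σ.ker)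
    (hanti : ∀ α ∈ skewSet inv σ, ∀ β ∈ skewSet inv σ, α * β + β * α = 0)
    (x y : G) (hx : inv x ≠ x) (hy : inv y ≠ y) (hyN : y ∉ σ.ker) :
    y⁻¹ * x * y = x ∨ y⁻¹ * x * y = inv x := by
  classical
  -- R is nontrivial
  have hR : Nontrivial R := by
    obtain ⟨g, hg⟩ : ∃ g, σ g ≠ 1 := by
      by_contra h; push_neg at h
      exact hnt (MonoidHom.ext fun g => h g)
    exact ⟨⟨(σ g : R), 1, fun hh => hg (Units.ext (by simpa using hh))⟩⟩
  have h2 : (2:R) ≠ 0 := Ring.two_ne_zero hchar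
  by_contra hcon
  push_neg at hcon
  obtain ⟨hcA, hcB⟩ := hcon
  have hc1 : x*y ≠ y*x := fun h =>
    hcA (by rw [mul_assoc, h, ← mul_assoc, inv_mul_cancel, one_mul])
  have hc2 : x*y ≠ y*(inv x) := fun h =>
    hcB (by rw [mul_assoc, h, ← mul_assoc, inv_mul_cancel, one_mul])
  obtain ⟨xs, hxsd⟩ : ∃ g, inv x = g := ⟨_, rfl⟩
  obtain ⟨ys, hysd⟩ : ∃ g, inv y = g := ⟨_, rfl⟩
  obtain ⟨s, hsd⟩ : ∃ r : R, ((σ x : Rˣ) : R) = r := ⟨_, rfl⟩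
  obtain ⟨t, htd⟩ : ∃ r : R, ((σ y : Rˣ) : R) = r := ⟨_, rfl⟩
  rw [hxsd] at hx hc2
  rw [hysd] at hy
  have ht1 : t ≠ 1 := by
    intro h
    exact hyN (by rw [MonoidHom.mem_ker]; exact Units.ext (by rw [htd, h]; rfl))
  have tcan : ∀ r : R, t * r = 0 → r = 0 := fun r h =>
    (Units.mul_right_eq_zero (σ y)).mp (by rw [htd]; exact h)
  have scan : ∀ r : R, s * r = 0 → r = 0 := fun r h =>
    (Units.mul_right_eq_zero (σ x)).mp (by rw [hsd]; exact h)
  -- skew elements δ_x and δ_y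
  have sky : (SS y 1 - SS ys t) ∈ skewSet inv σ := by
    have h := skew_delta inv hinv σ hcompat y; rwa [hysd, htd] at h
  have skx : (SS x 1 - SS xs s) ∈ skewSet inv σ := by
    have h := skew_delta inv hinv σ hcompat x; rwa [hxsd, hsd] at h
  -- Step 1 : facts from 2 δ_y² = 0
  have Hyy := hanti _ sky _ sky
  rw [expandP] at Hyy
  simp only [one_mul, mul_one] at Hyy
  have hha : y*y ≠ y*ys := fun h => hy (mul_left_cancel h).symm
  have hhb : ys*ys ≠ y*ys := fun h => hy (mul_right_cancel h)
  have hhc : y*ys ≠ y*y := fun h => hy (mul_left_cancel h)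
  have hhd : ys*y ≠ y*y := fun h => hy (mul_right_cancel h)
  have hcm : ys*y = y*ys := by
    by_contra hcm
    have e := coeff_zero Hyy (y*ys)
    simp only [MA_add_apply, MA_sub_apply, SS_apply,
      hha, hhb, hcm, if_true, if_false, if_neg, sub_zero, zero_sub, add_zero, zero_add,
      neg_zero, ite_true, ite_false, eq_self_iff_true, not_false_iff] at e
    exact h2 (tcan 2 (by linear_combination -e))
  have hR4 : (4:R) = 0 := by
    have e := coeff_zero Hyy (y*ys)
    simp only [MA_add_apply, MA_sub_apply, SS_apply,
      hha, hhb, hcm, if_true, if_false, sub_zero, zero_sub, add_zero, zero_add,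
      neg_zero, ite_true, ite_false, eq_self_iff_true, not_false_iff] at e
    exact tcan 4 (by linear_combination -e)
  have hsq : ys*ys = y*y := by
    by_contra hsq
    have e := coeff_zero Hyy (y*y)
    simp only [MA_add_apply, MA_sub_apply, SS_apply,
      hhc, hhd, hsq, if_true, if_false, sub_zero, zero_sub, add_zero, zero_add,
      neg_zero, ite_true, ite_false, eq_self_iff_true, not_false_iff] at e
    exact h2 (by linear_combination e)
  -- Step 2 : facts from 2 δ_x² = 0
  have Hxx := hanti _ skx _ skx
  rw [expandP] at Hxx
  simp only [one_mul, mul_one] at Hxx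
  have hhe : x*x ≠ x*xs := fun h => hx (mul_left_cancel h).symm
  have hhf : xs*xs ≠ x*xs := fun h => hx (mul_right_cancel h)
  have hhg : x*xs ≠ x*x := fun h => hx (mul_left_cancel h)
  have hhh : xs*x ≠ x*x := fun h => hx (mul_right_cancel h)
  have hcm2 : xs*x = x*xs := by
    by_contra hcm2
    have e := coeff_zero Hxx (x*xs)
    simp only [MA_add_apply, MA_sub_apply, SS_apply,
      hhe, hhf, hcm2, if_true, if_false, sub_zero, zero_sub, add_zero, zero_add,
      neg_zero, ite_true, ite_false, eq_self_iff_true, not_false_iff] at e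
    exact h2 (scan 2 (by linear_combination -e))
  -- Main equation: δ_x δ_y + δ_y δ_x = 0
  have HE := hanti _ skx _ sky
  rw [expandP, expandP] at HE
  simp only [one_mul, mul_one] at HE
  have hm1 : x*ys ≠ x*y := fun h => hy (mul_left_cancel h)
  have hm2 : xs*y ≠ x*y := fun h => hx (mul_right_cancel h)
  have hm3 : y*x ≠ x*y := fun h => hc1 h.symm
  have hm4 : y*xs ≠ x*y := fun h => hc2 h.symm
  by_cases hq : ys*x = x*y
  · by_cases hK : xs*ys = x*y
    · -- purely group-theoretic contradiction: x*y = y*xs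
      have h1 : xs*(ys*x) = x*(y*x) := by rw [← mul_assoc, hK, mul_assoc]
      rw [hq] at h1
      have h3 : x*(xs*y) = x*(y*x) := by rw [← mul_assoc, ← hcm2, mul_assoc]; exact h1
      have hA : xs*y = y*x := mul_left_cancel h3
      have hC : ys*(ys*x) = y*y*x := by rw [← mul_assoc, hsq]
      rw [hq, ← mul_assoc, hq, mul_assoc, mul_assoc] at hC
      -- hC : x*(y*y) = y*(y*x)
      have h5 : y*(xs*y) = x*(y*y) := by rw [hA]; exact hC.symm
      have h6 : (y*xs)*y = (x*y)*y := by rw [mul_assoc, mul_assoc]; exact h5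
      exact hc2 (mul_right_cancel h6).symm
    · -- coefficient of x*y gives 1 - t = 0
      have hr' : ¬(ys*xs = x*y) := fun h => hx (mul_left_cancel (hq.trans h.symm)).symm
      have e := coeff_zero HE (x*y)
      simp only [MA_add_apply, MA_sub_apply, SS_apply,
        hm1, hm2, hm3, hm4, hK, hq, hr', if_true, if_false, sub_zero, zero_sub,
        add_zero, zero_add, neg_zero, ite_true, ite_false, eq_self_iff_true,
        not_false_iff] at e
      exact ht1 (by linear_combination -e)
  · by_cases hr : ys*xs = x*y
    · by_cases hK : xs*ys = x*y
      · -- 1 + 2st = 0, contradiction with 4 = 0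
        have e := coeff_zero HE (x*y)
        simp only [MA_add_apply, MA_sub_apply, SS_apply,
          hm1, hm2, hm3, hm4, hK, hq, hr, if_true, if_false, sub_zero, zero_sub,
          add_zero, zero_add, neg_zero, ite_true, ite_false, eq_self_iff_true,
          not_false_iff] at e
        exact h2 (by linear_combination 2*e - (s*t)*hR4)
      · -- 1 + st = 0 and xy symmetric: use skew element 2·(xy)
        have e := coeff_zero HE (x*y)
        simp only [MA_add_apply, MA_sub_apply, SS_apply,
          hm1, hm2, hm3, hm4, hK, hq, hr, if_true, if_false, sub_zero, zero_sub,
          add_zero, zero_add, neg_zero, ite_true, ite_false, eq_self_iff_true,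
          not_false_iff] at e
        -- e : 1 + t*s = 0
        have hσz : ((σ (x*y) : Rˣ) : R) = s*t := by
          rw [map_mul, Units.val_mul, hsd, htd]
        have hzz : inv (x*y) = x*y := by rw [hmul, hysd, hxsd, hr]
        have skz : (SS (x*y) (2:R)) ∈ skewSet inv σ :=
          skew_two inv σ (x*y) hzz (by rw [hσz]; linear_combination 2*e)
        have Hzy := hanti _ skz _ sky
        rw [expandL, expandR] at Hzy
        simp only [one_mul, mul_one] at Hzy
        have hn1 : x*y*ys ≠ x*y*y := fun h => hy (mul_left_cancel h)
        have hn2 : y*(x*y) ≠ x*y*y := fun h => hc1 (by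
          rw [← mul_assoc] at h; exact (mul_right_cancel h).symm)
        have hn3 : ys*(x*y) ≠ x*y*y := fun h => hq (by
          rw [← mul_assoc] at h; exact mul_right_cancel h)
        have e2 := coeff_zero Hzy (x*y*y)
        simp only [MA_add_apply, MA_sub_apply, SS_apply,
          hn1, hn2, hn3, if_true, if_false, sub_zero, zero_sub, add_zero, zero_add,
          neg_zero, ite_true, ite_false, eq_self_iff_true, not_false_iff] at e2
        exact h2 (by linear_combination e2)
    · by_cases hK : xs*ys = x*y
      · -- 1 + st = 0 and (xy)* = yx : use δ_{xy} against δ_x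
        have e := coeff_zero HE (x*y)
        simp only [MA_add_apply, MA_sub_apply, SS_apply,
          hm1, hm2, hm3, hm4, hK, hq, hr, if_true, if_false, sub_zero, zero_sub,
          add_zero, zero_add, neg_zero, ite_true, ite_false, eq_self_iff_true,
          not_false_iff] at e
        -- e : 1 + s*t = 0
        have hσz : ((σ (x*y) : Rˣ) : R) = s*t := by
          rw [map_mul, Units.val_mul, hsd, htd]
        have hzz : inv (x*y) = y*x := by
          rw [← hK, hmul, ← hysd, ← hxsd, hinv, hinv]
        have skz : (SS (x*y) 1 - SS (y*x) (s*t)) ∈ skewSet inv σ := by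
          have h := skew_delta inv hinv σ hcompat (x*y); rwa [hzz, hσz] at h
        have Hzx := hanti _ skz _ skx
        rw [expandP, expandP] at Hzx
        simp only [one_mul, mul_one] at Hzx
        have hp2 : x*y*xs ≠ x*(y*x) := fun h => hx (by
          rw [← mul_assoc] at h; exact mul_left_cancel h)
        have hp3 : y*x*x ≠ x*(y*x) := fun h => hc1 (by
          rw [← mul_assoc] at h; exact (mul_right_cancel h).symm)
        have hp4 : y*x*xs ≠ x*(y*x) := fun h => hc2 (by
          rw [← mul_assoc, mul_assoc, ← hcm2, ← mul_assoc] at h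
          exact (mul_right_cancel h).symm)
        have hp5 : x*(x*y) ≠ x*(y*x) := fun h => hc1 (mul_left_cancel h)
        have hp8 : xs*(y*x) ≠ x*(y*x) := fun h => hx (by
          rw [← mul_assoc, ← mul_assoc] at h
          exact mul_right_cancel (mul_right_cancel h))
        have hp1 : x*y*x = x*(y*x) := mul_assoc x y x
        by_cases he : xs*(x*y) = x*(y*x)
        · have e3 := coeff_zero Hzx (x*(y*x))
          simp only [MA_add_apply, MA_sub_apply, SS_apply,
            hp1, hp2, hp3, hp4, hp5, hp8, he, if_true, if_false, sub_zero, zero_sub,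
            add_zero, zero_add, neg_zero, ite_true, ite_false, eq_self_iff_true,
            not_false_iff] at e3
          exact h2 (scan 2 (by linear_combination (-2)*e3 + (-2)*e + hR4))
        · have e3 := coeff_zero Hzx (x*(y*x))
          simp only [MA_add_apply, MA_sub_apply, SS_apply,
            hp1, hp2, hp3, hp4, hp5, hp8, he, if_true, if_false, sub_zero, zero_sub,
            add_zero, zero_add, neg_zero, ite_true, ite_false, eq_self_iff_true,
            not_false_iff] at e3
          exact h2 (by linear_combination e3 + e)
      · -- coefficient of x*y gives 1 = 0
        have e := coeff_zero HE (x*y)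
        simp only [MA_add_apply, MA_sub_apply, SS_apply,
          hm1, hm2, hm3, hm4, hK, hq, hr, if_true, if_false, sub_zero, zero_sub,
          add_zero, zero_add, neg_zero, ite_true, ite_false, eq_self_iff_true,
          not_false_iff] at e
        exact one_ne_zero e
end

section
/- If (RG)^- is anticommutative, then for all x, y ∈ G with x^* ≠ x and y^* ≠ y: (i) y^{-1}xy ∈ {x, x^*}, and in particular xy = x^*y^*; (ii) (xy)^* = xy if and only if xy = yx. -/
open Finsupp

namespace Aux10

set_option linter.unusedSectionVars false

variable {R : Type} [CommRing R] {G : Type} [Group G]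

lemma sigmaStar_single (inv : G → G) (σ : G →* Rˣ) (g : G) (a : R) :
    sigmaStar inv σ (MonoidAlgebra.single g a : MonoidAlgebra R G)
      = MonoidAlgebra.single (inv g) ((σ g : R) * a) := by
  unfold sigmaStar
  rw [MonoidAlgebra.coeff_single, ← MonoidAlgebra.ofCoeff_single]
  congr 1
  exact Finsupp.sum_single_index (by simp)

lemma sigmaStar_add (inv : G → G) (σ : G →* Rˣ) (α β : MonoidAlgebra R G) :
    sigmaStar inv σ (α + β) = sigmaStar inv σ α + sigmaStar inv σ β := by
  unfold sigmaStar
  rw [MonoidAlgebra.coeff_add, ← MonoidAlgebra.ofCoeff_add]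
  congr 1
  exact Finsupp.sum_add_index' (fun a => by simp)
    (fun a b₁ b₂ => by rw [mul_add, Finsupp.single_add])

noncomputable def aEl (inv : G → G) (σ : G →* Rˣ) (g : G) : MonoidAlgebra R G :=
  MonoidAlgebra.single g 1 + MonoidAlgebra.single (inv g) (-(σ g : R))

lemma sigma_inv_mul (inv : G → G) (σ : G →* Rˣ)
    (hcompat : ∀ x : G, x * inv x ∈ σ.ker) (g : G) :
    ((σ (inv g) : R)) * ((σ g : R)) = 1 := by
  have h1 : σ (g * inv g) = 1 := hcompat g
  rw [map_mul] at h1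
  have := congrArg (fun u : Rˣ => (u : R)) h1
  simpa [mul_comm] using this

lemma aEl_mem_skew (inv : G → G) (σ : G →* Rˣ)
    (hinv : ∀ x : G, inv (inv x) = x)
    (hcompat : ∀ x : G, x * inv x ∈ σ.ker) (g : G) :
    (aEl inv σ g : MonoidAlgebra R G) ∈ skewSet inv σ := by
  show sigmaStar inv σ (aEl inv σ g) = -(aEl inv σ g)
  unfold aEl
  rw [sigmaStar_add, sigmaStar_single, sigmaStar_single, hinv g, mul_one]
  have h1 : (σ (inv g) : R) * (-(σ g : R)) = -1 := by
    rw [mul_neg, sigma_inv_mul inv σ hcompat g]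
  rw [h1, neg_add, ← MonoidAlgebra.single_neg, ← MonoidAlgebra.single_neg, neg_neg]
  exact add_comm _ _

lemma single_mem_skew (inv : G → G) (σ : G →* Rˣ) (z : G)
    (hz : inv z = z) (hσz : (σ z : R) = -1) :
    (MonoidAlgebra.single z 1 : MonoidAlgebra R G) ∈ skewSet inv σ := by
  show sigmaStar inv σ _ = _
  rw [sigmaStar_single, hz, mul_one, hσz, ← MonoidAlgebra.single_neg]

lemma prod_form (inv : G → G) (a b : G) (ca cb : R) :
    ((MonoidAlgebra.single a 1 + MonoidAlgebra.single (inv a) ca) *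
      (MonoidAlgebra.single b 1 + MonoidAlgebra.single (inv b) cb)
     + (MonoidAlgebra.single b 1 + MonoidAlgebra.single (inv b) cb) *
      (MonoidAlgebra.single a 1 + MonoidAlgebra.single (inv a) ca) : MonoidAlgebra R G)
    = MonoidAlgebra.single (a*b) 1 + MonoidAlgebra.single (a*inv b) cb
      + MonoidAlgebra.single (inv a*b) ca
      + MonoidAlgebra.single (inv a*inv b) (ca*cb)
      + MonoidAlgebra.single (b*a) 1 + MonoidAlgebra.single (b*inv a) ca
      + MonoidAlgebra.single (inv b*a) cb
      + MonoidAlgebra.single (inv b*inv a) (cb*ca) := by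
  simp only [add_mul, mul_add, MonoidAlgebra.single_mul_single, one_mul, mul_one]
  abel

lemma prod_formZ (inv : G → G) (z a : G) (ca : R) :
    ((MonoidAlgebra.single z 1 : MonoidAlgebra R G) *
      (MonoidAlgebra.single a 1 + MonoidAlgebra.single (inv a) ca)
     + (MonoidAlgebra.single a 1 + MonoidAlgebra.single (inv a) ca) *
      MonoidAlgebra.single z 1)
    = MonoidAlgebra.single (z*a) 1 + MonoidAlgebra.single (z*inv a) ca
      + MonoidAlgebra.single (a*z) 1 + MonoidAlgebra.single (inv a*z) ca := by
  simp only [add_mul, mul_add, MonoidAlgebra.single_mul_single, one_mul, mul_one]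
  abel

lemma coeff_eq8 {g1 g2 g3 g4 g5 g6 g7 g8 : G} {c1 c2 c3 c4 c5 c6 c7 c8 : R}
    (H : (MonoidAlgebra.single g1 c1 + MonoidAlgebra.single g2 c2 + MonoidAlgebra.single g3 c3
      + MonoidAlgebra.single g4 c4 + MonoidAlgebra.single g5 c5 + MonoidAlgebra.single g6 c6
      + MonoidAlgebra.single g7 c7 + MonoidAlgebra.single g8 c8 : MonoidAlgebra R G) = 0)
    (t : G) :
    (Finsupp.single g1 c1 : G →₀ R) t + (Finsupp.single g2 c2 : G →₀ R) t
    + (Finsupp.single g3 c3 : G →₀ R) t + (Finsupp.single g4 c4 : G →₀ R) t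
    + (Finsupp.single g5 c5 : G →₀ R) t + (Finsupp.single g6 c6 : G →₀ R) t
    + (Finsupp.single g7 c7 : G →₀ R) t + (Finsupp.single g8 c8 : G →₀ R) t = 0 := by
  have H' : (Finsupp.single g1 c1 + Finsupp.single g2 c2 + Finsupp.single g3 c3
      + Finsupp.single g4 c4 + Finsupp.single g5 c5 + Finsupp.single g6 c6
      + Finsupp.single g7 c7 + Finsupp.single g8 c8 : G →₀ R) = 0 := congrArg MonoidAlgebra.coeff H
  have := congrArg (fun f : G →₀ R => f t) H'
  simpa [Finsupp.add_apply] using this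

lemma coeff_eq4 {g1 g2 g3 g4 : G} {c1 c2 c3 c4 : R}
    (H : (MonoidAlgebra.single g1 c1 + MonoidAlgebra.single g2 c2 + MonoidAlgebra.single g3 c3
      + MonoidAlgebra.single g4 c4 : MonoidAlgebra R G) = 0) (t : G) :
    (Finsupp.single g1 c1 : G →₀ R) t + (Finsupp.single g2 c2 : G →₀ R) t
    + (Finsupp.single g3 c3 : G →₀ R) t + (Finsupp.single g4 c4 : G →₀ R) t = 0 := by
  have H' : (Finsupp.single g1 c1 + Finsupp.single g2 c2 + Finsupp.single g3 c3
      + Finsupp.single g4 c4 : G →₀ R) = 0 := congrArg MonoidAlgebra.coeff H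
  have := congrArg (fun f : G →₀ R => f t) H'
  simpa [Finsupp.add_apply] using this

lemma sap_pos {a t : G} (c : R) (h : a = t) : (Finsupp.single a c : G →₀ R) t = c := by
  subst h; simp

lemma sap_neg {a t : G} (c : R) (h : ¬ a = t) : (Finsupp.single a c : G →₀ R) t = 0 :=
  Finsupp.single_eq_of_ne' h

/-- main equation extractor for a pair of elements -/
lemma eq8 (inv : G → G) (σ : G →* Rˣ)
    (hinv : ∀ x : G, inv (inv x) = x)
    (hcompat : ∀ x : G, x * inv x ∈ σ.ker)
    (hanti : ∀ α ∈ skewSet inv σ, ∀ β ∈ skewSet inv σ, α * β + β * α = 0)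
    (g h t : G) :
    (Finsupp.single (g*h) (1:R) : G →₀ R) t
    + (Finsupp.single (g*inv h) (-(σ h : R)) : G →₀ R) t
    + (Finsupp.single (inv g*h) (-(σ g : R)) : G →₀ R) t
    + (Finsupp.single (inv g*inv h) ((-(σ g : R))*(-(σ h : R))) : G →₀ R) t
    + (Finsupp.single (h*g) (1:R) : G →₀ R) t
    + (Finsupp.single (h*inv g) (-(σ g : R)) : G →₀ R) t
    + (Finsupp.single (inv h*g) (-(σ h : R)) : G →₀ R) t
    + (Finsupp.single (inv h*inv g) ((-(σ h : R))*(-(σ g : R))) : G →₀ R) t = 0 := by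
  have E := hanti _ (aEl_mem_skew inv σ hinv hcompat g) _ (aEl_mem_skew inv σ hinv hcompat h)
  unfold aEl at E
  rw [prod_form] at E
  exact coeff_eq8 E t

/-- equation extractor for a symmetric skew single with σ value -1 -/
lemma eqZ (inv : G → G) (σ : G →* Rˣ)
    (hinv : ∀ x : G, inv (inv x) = x)
    (hcompat : ∀ x : G, x * inv x ∈ σ.ker)
    (hanti : ∀ α ∈ skewSet inv σ, ∀ β ∈ skewSet inv σ, α * β + β * α = 0)
    (z g : G) (hz : inv z = z) (hσz : (σ z : R) = -1) (t : G) :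
    (Finsupp.single (z*g) (1:R) : G →₀ R) t
    + (Finsupp.single (z*inv g) (-(σ g : R)) : G →₀ R) t
    + (Finsupp.single (g*z) (1:R) : G →₀ R) t
    + (Finsupp.single (inv g*z) (-(σ g : R)) : G →₀ R) t = 0 := by
  have E := hanti _ (single_mem_skew inv σ z hz hσz) _ (aEl_mem_skew inv σ hinv hcompat g)
  unfold aEl at E
  rw [prod_formZ] at E
  exact coeff_eq4 E t

lemma unit_ne_zero (h2 : (2:R) ≠ 0) (w : Rˣ) : (w : R) ≠ 0 := fun h0 => by
  apply h2
  calc (2:R) = 2*((w:R)*((w⁻¹ : Rˣ) : R)) := by rw [Units.mul_inv, mul_one]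
  _ = 0 := by rw [h0, zero_mul, mul_zero]

lemma two_mul_unit_ne (h2 : (2:R) ≠ 0) (w : Rˣ) (h : (2:R)*(w:R) = 0) : False := by
  apply h2
  calc (2:R) = (2*(w:R))*((w⁻¹ : Rˣ) : R) := by rw [mul_assoc, Units.mul_inv, mul_one]
  _ = 0 := by rw [h, zero_mul]

/-- The fundamental facts for nonsymmetric elements. -/
lemma Ffacts (inv : G → G) (σ : G →* Rˣ)
    (hinv : ∀ x : G, inv (inv x) = x)
    (hcompat : ∀ x : G, x * inv x ∈ σ.ker)
    (hanti : ∀ α ∈ skewSet inv σ, ∀ β ∈ skewSet inv σ, α * β + β * α = 0)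
    (h2 : (2:R) ≠ 0) (g : G) (hg : inv g ≠ g) :
    inv g * g = g * inv g ∧ inv g * inv g = g * g
      ∧ (2:R) + 2*(σ g : R)^2 = 0 ∧ (4:R) = 0 := by
  have pf1 : ¬ g*g = g*inv g := fun hh => hg (mul_left_cancel hh).symm
  have pf4 : ¬ inv g*inv g = g*inv g := fun hh => hg (mul_right_cancel hh)
  have e := eq8 inv σ hinv hcompat hanti g g (g*inv g)
  rw [sap_neg _ pf1, sap_pos _ rfl, sap_neg _ pf4] at e
  by_cases hF1 : inv g * g = g * inv g
  · rw [sap_pos _ hF1] at e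
    -- e : 0 + (-(σ g)) + (-(σ g)) + 0 + 0 + (-(σ g)) + (-(σ g)) + 0 = 0
    have h4w : (4:R)*(σ g : R) = 0 := by linear_combination -e
    have h4 : (4:R) = 0 := by
      calc (4:R) = (4*(σ g : R))*(((σ g)⁻¹ : Rˣ) : R) := by
            rw [mul_assoc, Units.mul_inv, mul_one]
      _ = 0 := by rw [h4w, zero_mul]
    -- second point
    have qf1 : ¬ g*inv g = g*g := fun hh => hg (mul_left_cancel hh)
    have qf3 : ¬ inv g*g = g*g := fun hh => hg (mul_right_cancel hh)
    have e2 := eq8 inv σ hinv hcompat hanti g g (g*g)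
    rw [sap_pos _ rfl, sap_neg _ qf1, sap_neg _ qf3] at e2
    by_cases hF2 : inv g * inv g = g * g
    · rw [sap_pos _ hF2] at e2
      exact ⟨hF1, hF2, by linear_combination e2, h4⟩
    · rw [sap_neg _ hF2] at e2
      exact absurd (by linear_combination e2 : (2:R) = 0) h2
  · rw [sap_neg _ hF1] at e
    exact absurd (two_mul_unit_ne h2 (σ g) (by linear_combination -e)) id



/-- Core lemma: if p,q are nonsymmetric, pq = q p*, pq ≠ p*q*, pq ≠ q*p then contradiction. -/
lemma CL (inv : G → G) (σ : G →* Rˣ)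
    (hmul : ∀ x y : G, inv (x * y) = inv y * inv x)
    (hinv : ∀ x : G, inv (inv x) = x)
    (hcompat : ∀ x : G, x * inv x ∈ σ.ker)
    (hanti : ∀ α ∈ skewSet inv σ, ∀ β ∈ skewSet inv σ, α * β + β * α = 0)
    (h2 : (2:R) ≠ 0) (p q : G) (hp : inv p ≠ p) (hq : inv q ≠ q)
    (hA : p*q = q*inv p) (hD : p*q ≠ inv p*inv q) (hG : p*q ≠ inv q*p) : False := by
  obtain ⟨F1q, F2q, hq3, h4⟩ := Ffacts inv σ hinv hcompat hanti h2 q hq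
  -- auto exclusions
  have aE : ¬ q*p = p*q := fun hh => hp (mul_left_cancel (hA.symm.trans hh.symm))
  have aH : ¬ inv q*inv p = p*q := fun hh => hq (mul_right_cancel (hh.trans hA))
  -- Step 1 : σ p = 1
  have e1 := eq8 inv σ hinv hcompat hanti p q (p*q)
  rw [sap_pos _ rfl, sap_neg _ (fun hh => hq (mul_left_cancel hh)),
      sap_neg _ (fun hh => hp (mul_right_cancel hh)),
      sap_neg _ (fun hh => hD hh.symm), sap_neg _ aE,
      sap_pos _ hA.symm, sap_neg _ (fun hh => hG hh.symm), sap_neg _ aH] at e1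
  have hu1 : (σ p : R) = 1 := by linear_combination -e1
  -- Step 2 : star of z = pq
  have hzstar : inv (p*q) = p*inv q := by
    have h := congrArg inv hA
    rwa [hmul q (inv p), hinv p] at h
  -- Step 3 : 1 + v² = 0
  have e3 := eq8 inv σ hinv hcompat hanti (p*q) q ((p*q)*q)
  rw [hzstar] at e3
  simp only [map_mul, Units.val_mul] at e3
  rw [hu1, one_mul] at e3
  have pfT2 : ¬ (p*q)*inv q = (p*q)*q := fun hh => hq (mul_left_cancel hh)
  have pfT3 : ¬ (p*inv q)*q = (p*q)*q :=
    fun hh => hq (mul_left_cancel (mul_right_cancel hh : p*inv q = p*q))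
  have pfT4 : (p*inv q)*inv q = (p*q)*q := by rw [mul_assoc, F2q, ← mul_assoc]
  have pfT5 : ¬ q*(p*q) = (p*q)*q := fun hh => aE (mul_right_cancel (by
    rw [mul_assoc]; exact hh))
  have pfT7 : ¬ inv q*(p*q) = (p*q)*q := fun hh => hG (mul_right_cancel (by
    rw [mul_assoc]; exact hh : (inv q*p)*q = (p*q)*q).symm
    )
  rw [sap_pos _ rfl, sap_neg _ pfT2, sap_neg _ pfT3, sap_pos _ pfT4,
      sap_neg _ pfT5, sap_neg _ pfT7] at e3
  by_cases k1 : q*(p*inv q) = (p*q)*q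
  · by_cases k2 : inv q*(p*inv q) = (p*q)*q
    · exact hq (mul_right_cancel (k2.trans k1.symm))
    · rw [sap_pos _ k1, sap_neg _ k2] at e3
      exact two_mul_unit_ne h2 (σ q) (by linear_combination -2*e3 + hq3)
  · by_cases k2 : inv q*(p*inv q) = (p*q)*q
    · rw [sap_neg _ k1, sap_pos _ k2] at e3
      exact h2 (by linear_combination 2*e3 - (σ q : R)^2*h4)
    · rw [sap_neg _ k1, sap_neg _ k2] at e3
      have hv2 : 1 + (σ q : R)^2 = 0 := by linear_combination e3
      -- Step 4 : exclusion pf_BC and hBG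
      have pf_BC : ¬ inv p*q = p*inv q := by
        intro hh
        have h := congrArg inv hh
        rw [hmul (inv p) q, hinv p, hmul p (inv q), hinv q] at h
        -- h : inv q * p = q * inv p
        exact hG (hA.trans h.symm)
      have pf_BE : ¬ q*p = p*inv q := by
        intro hh
        have h := congrArg inv hh
        rw [hmul q p, hmul p (inv q), hinv q] at h
        -- h : inv p * inv q = q * inv p
        exact hD (hA.trans h.symm)
      have pf_B1 : ¬ p*q = p*inv q := fun hh => hq (mul_left_cancel hh).symm
      have pf_B8 : inv q*inv p = p*inv q := (hmul p q).symm.trans hzstar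
      have e4 := eq8 inv σ hinv hcompat hanti p q (p*inv q)
      rw [sap_neg _ pf_B1, sap_pos _ rfl, sap_neg _ pf_BC,
          sap_neg _ (fun hh => hp (mul_right_cancel hh)), sap_neg _ pf_BE,
          sap_neg _ (fun hh => pf_B1 (hA.trans hh)), sap_pos _ pf_B8] at e4
      have hBG : ¬ inv q*p = p*inv q := by
        intro hh
        rw [sap_pos _ hh] at e4
        exact unit_ne_zero h2 (σ q) (by linear_combination -e4 + (σ q : R)*hu1)
      rw [sap_neg _ hBG] at e4
      -- Step 5 : hCE
      have pf_C1 : ¬ p*q = inv p*q := fun hh => hp (mul_right_cancel hh).symm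
      have e5 := eq8 inv σ hinv hcompat hanti p q (inv p*q)
      rw [sap_neg _ pf_C1, sap_neg _ (fun hh => pf_BC hh.symm), sap_pos _ rfl,
          sap_neg _ (fun hh => hq (mul_left_cancel hh)),
          sap_neg _ (fun hh => pf_C1 (hA.trans hh)),
          sap_neg _ (fun hh => pf_BC (pf_B8.symm.trans hh).symm)] at e5
      have hCE : q*p = inv p*q := by
        by_cases c_e : q*p = inv p*q
        · exact c_e
        · exfalso
          rw [sap_neg _ c_e] at e5
          by_cases c_g : inv q*p = inv p*q
          · rw [sap_pos _ c_g] at e5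
            exact h2 (by linear_combination hv2 + ((σ q : R)-1)*e5 + ((σ q : R)-1)*hu1)
          · rw [sap_neg _ c_g] at e5
            exact h2 (by linear_combination -2*e5 - 2*hu1)
      rw [sap_pos _ hCE] at e5
      -- Step 5b : c_g must now be excluded for later? derive hDG
      have hDG : inv p*inv q = inv q*p := by
        have h := congrArg inv hCE
        rwa [hmul q p, hmul (inv p) q, hinv p] at h
      -- Step 6 : F-facts for z = pq
      have hznonsym : inv (p*q) ≠ p*q := by
        rw [hzstar]; exact fun hh => hq (mul_left_cancel hh)
      obtain ⟨F1z, F2z, _, _⟩ := Ffacts inv σ hinv hcompat hanti h2 (p*q) hznonsym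
      rw [hzstar] at F1z F2z
      -- F1z : (p*inv q)*(p*q) = (p*q)*(p*inv q) ; F2z : (p*inv q)*(p*inv q) = (p*q)*(p*q)
      have R4 : inv q*(p*q) = q*(p*inv q) := by
        apply mul_left_cancel (a := p)
        rw [← mul_assoc p (inv q) (p*q), ← mul_assoc p q (p*inv q)]; exact F1z
      have R5 : inv q*(p*inv q) = q*(p*q) := by
        apply mul_left_cancel (a := p)
        rw [← mul_assoc p (inv q) (p*inv q), ← mul_assoc p q (p*q)]; exact F2z
      -- Step 8 : final contradiction with m = qp
      have hmstar : inv (q*p) = inv q*p := (hmul q p).trans hDG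
      have e8 := eq8 inv σ hinv hcompat hanti (q*p) q (q*(inv q*p))
      rw [hmstar] at e8
      simp only [map_mul, Units.val_mul] at e8
      have w1 : ¬ (q*p)*q = q*(inv q*p) := by
        rw [mul_assoc]; exact fun hh => hG (mul_left_cancel hh)
      have w2' : ¬ (q*p)*inv q = q*(inv q*p) := by
        rw [mul_assoc]
        intro hh
        exact hBG (mul_left_cancel hh).symm
      have w3 : ¬ (inv q*p)*q = q*(inv q*p) := by
        rw [mul_assoc, R4]
        intro hh
        exact hBG (mul_left_cancel hh).symm
      have w4 : ¬ (inv q*p)*inv q = q*(inv q*p) := by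
        rw [mul_assoc, R5]
        intro hh
        exact hG (mul_left_cancel hh)
      have w5 : ¬ q*(q*p) = q*(inv q*p) := fun hh =>
        hq (mul_right_cancel (mul_left_cancel hh)).symm
      have w7 : inv q*(q*p) = q*(inv q*p) := by
        rw [← mul_assoc, F1q, mul_assoc]
      have w8 : ¬ inv q*(inv q*p) = q*(inv q*p) := by
        rw [← mul_assoc, ← mul_assoc, F2q]
        intro hh
        exact hq (mul_left_cancel (mul_right_cancel hh : q*q = q*inv q)).symm
      rw [sap_neg _ w1, sap_neg _ w2', sap_neg _ w3, sap_neg _ w4,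
          sap_neg _ w5, sap_pos _ rfl, sap_pos _ w7, sap_neg _ w8] at e8
      exact two_mul_unit_ne h2 (σ q) (by linear_combination -e8 - (σ q : R)*hu1)

end Aux10

theorem stmt10 {R : Type} [CommRing R] (hchar : ringChar R ≠ 2) {G : Type} [Group G]
    (inv : G → G) (hmul : ∀ x y : G, inv (x * y) = inv y * inv x)
    (hinv : ∀ x : G, inv (inv x) = x) (σ : G →* Rˣ) (hnt : σ ≠ 1)
    (hcompat : ∀ x : G, x * inv x ∈ σ.ker)
    (hanti : ∀ α ∈ skewSet inv σ, ∀ β ∈ skewSet inv σ, α * β + β * α = 0)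
    (x y : G) (hx : inv x ≠ x) (hy : inv y ≠ y) :
    ((y⁻¹ * x * y = x ∨ y⁻¹ * x * y = inv x) ∧ x * y = inv x * inv y) ∧
    (inv (x * y) = x * y ↔ x * y = y * x) := by
  classical
  -- 1 ≠ 0
  have h10 : (1:R) ≠ 0 := by
    intro h0
    apply hnt
    have hall : ∀ a : R, a = 0 := fun a => by
      calc a = a*1 := (mul_one a).symm
      _ = a*0 := by rw [h0]
      _ = 0 := mul_zero a
    ext g
    show ((σ g : Rˣ) : R) = ((1 : Rˣ) : R)
    rw [hall ((σ g : Rˣ) : R), hall ((1 : Rˣ) : R)]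
  -- 2 ≠ 0
  have h2 : (2:R) ≠ 0 := by
    intro h0
    have hd : ringChar R ∣ 2 := ringChar.dvd (by push_cast; exact h0)
    rcases (Nat.dvd_prime Nat.prime_two).mp hd with h1 | h1
    · apply h10
      have := (ringChar.spec R 1).mpr (by rw [h1])
      simpa using this
    · exact hchar h1
  obtain ⟨F1x, F2x, hx3, h4⟩ := Aux10.Ffacts inv σ hinv hcompat hanti h2 x hx
  obtain ⟨F1y, F2y, hy3, -⟩ := Aux10.Ffacts inv σ hinv hcompat hanti h2 y hy
  -- the main coefficient equation at point x*y
  have key : (inv x * inv y = x*y) ∧ (y*x = x*y ∨ y*inv x = x*y) := by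
    have pf2 : ¬ x*inv y = x*y := fun hh => hy (mul_left_cancel hh)
    have pf3 : ¬ inv x*y = x*y := fun hh => hx (mul_right_cancel hh)
    have e := Aux10.eq8 inv σ hinv hcompat hanti x y (x*y)
    rw [Aux10.sap_pos _ rfl, Aux10.sap_neg _ pf2, Aux10.sap_neg _ pf3] at e
    by_cases hE : y*x = x*y
    · -- case A = E
      have hHD : inv x*inv y = inv y*inv x := by
        have h := congrArg inv hE
        rwa [hmul y x, hmul x y] at h
      have pf6 : ¬ y*inv x = x*y := fun hh => hx (mul_left_cancel (hh.trans hE.symm))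
      have pf7 : ¬ inv y*x = x*y := fun hh => hy (mul_right_cancel (hh.trans hE.symm))
      by_cases hD : inv x*inv y = x*y
      · exact ⟨hD, Or.inl hE⟩
      · exfalso
        have pf8 : ¬ inv y*inv x = x*y := fun hh => hD (hHD.trans hh)
        rw [Aux10.sap_neg _ hD, Aux10.sap_pos _ hE, Aux10.sap_neg _ pf6,
            Aux10.sap_neg _ pf7, Aux10.sap_neg _ pf8] at e
        exact h2 (by linear_combination e)
    · by_cases hF : y*inv x = x*y
      · have pf8 : ¬ inv y*inv x = x*y := fun hh =>
          hy (mul_right_cancel (hh.trans hF.symm))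
        by_cases hD : inv x*inv y = x*y
        · exact ⟨hD, Or.inr hF⟩
        · exfalso
          by_cases hG : inv y*x = x*y
          · -- 1 - u - v = 0 kill
            rw [Aux10.sap_neg _ hD, Aux10.sap_neg _ hE, Aux10.sap_pos _ hF,
                Aux10.sap_pos _ hG, Aux10.sap_neg _ pf8] at e
            exact h2 (by linear_combination hy3 - hx3 + (σ x : R)*h4
              + (2 - 2*(σ x : R) + 2*(σ y : R))*e)
          · -- CL (x,y)
            exact Aux10.CL inv σ hmul hinv hcompat hanti h2 x y hx hy hF.symm
              (fun hh => hD hh.symm) (fun hh => hG hh.symm)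
      · by_cases hG : inv y*x = x*y
        · by_cases hD : inv x*inv y = x*y
          · -- A = G = D kill
            exfalso
            have hCE2 : y*x = inv x*y := by
              have h := congrArg inv (hD.trans hG.symm)
              rwa [hmul (inv x) (inv y), hinv x, hinv y, hmul (inv y) x, hinv y] at h
            have hEHp : y*x = inv y*inv x := by
              have h := congrArg inv hD
              rwa [hmul (inv x) (inv y), hinv x, hinv y, hmul x y] at h
            have qf1 : ¬ x*y = x*inv y := fun hh => hy (mul_left_cancel hh).symm
            have qf3 : ¬ inv x*y = x*inv y := by
              intro hh
              have h := congrArg inv hh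
              rw [hmul (inv x) y, hinv x, hmul x (inv y), hinv y] at h
              -- h : inv y * x = y * inv x
              exact hF (h.symm.trans hG)
            have qf4 : ¬ inv x*inv y = x*inv y := fun hh => hx (mul_right_cancel hh)
            have qf5 : ¬ y*x = x*inv y := fun hh => qf3 (hCE2.symm.trans hh)
            have qf7 : ¬ inv y*x = x*inv y := fun hh => hy (mul_left_cancel (hG.symm.trans hh)).symm
            have qf8 : ¬ inv y*inv x = x*inv y := fun hh => qf5 (hEHp.trans hh)
            have e2 := Aux10.eq8 inv σ hinv hcompat hanti x y (x*inv y)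
            rw [Aux10.sap_neg _ qf1, Aux10.sap_pos _ rfl, Aux10.sap_neg _ qf3,
                Aux10.sap_neg _ qf4, Aux10.sap_neg _ qf5, Aux10.sap_neg _ qf7,
                Aux10.sap_neg _ qf8] at e2
            by_cases m6 : y*inv x = x*inv y
            · rw [Aux10.sap_pos _ m6] at e2
              -- e2 : -(v) + -(u) = 0 i.e. v = -u
              have hveq : (σ y : R) = -(σ x : R) := by linear_combination -e2
              -- main equation: indicators d=1, g=1 others 0
              rw [Aux10.sap_pos _ hD, Aux10.sap_neg _ hE, Aux10.sap_neg _ hF,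
                  Aux10.sap_pos _ hG, Aux10.sap_neg _ (fun hh => hE (hEHp.symm ▸ hh))] at e
              rw [hveq] at e
              exact Aux10.two_mul_unit_ne h2 (σ x)
                (by linear_combination 2*e + (σ x : R)^2*h4 - hx3)
            · rw [Aux10.sap_neg _ m6] at e2
              exact Aux10.unit_ne_zero h2 (σ y) (by linear_combination -e2)
          · -- CL (inv y, x)
            exfalso
            have hp' : inv (inv y) ≠ inv y := by
              rw [hinv y]; exact fun hh => hy hh.symm
            have hA' : inv y*x = x*inv (inv y) := by rw [hinv y]; exact hG
            have hD' : inv y*x ≠ inv (inv y)*inv x := by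
              rw [hinv y]; exact fun hh => hF (hh.symm.trans hG)
            have hG' : inv y*x ≠ inv x*inv y := fun hh => hD (hh.symm.trans hG)
            exact Aux10.CL inv σ hmul hinv hcompat hanti h2 (inv y) x hp' hx hA' hD' hG'
        · by_cases hD : inv x*inv y = x*y
          · -- branch B5 kill
            exfalso
            have hH8 : ¬ inv y*inv x = x*y := by
              intro hh
              have h1 : inv y*inv x = inv x*inv y := hh.trans hD.symm
              have h := congrArg inv h1
              rw [hmul (inv y) (inv x), hinv x, hinv y,
                  hmul (inv x) (inv y), hinv x, hinv y] at h
              -- h : x*y = y*x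
              exact hE h.symm
            rw [Aux10.sap_pos _ hD, Aux10.sap_neg _ hE, Aux10.sap_neg _ hF,
                Aux10.sap_neg _ hG, Aux10.sap_neg _ hH8] at e
            have huv : 1 + (σ x : R)*(σ y : R) = 0 := by linear_combination e
            -- equation for pair (x*y, x) at x*(x*y)
            have e3 := Aux10.eq8 inv σ hinv hcompat hanti (x*y) x (x*(x*y))
            rw [hmul x y] at e3
            simp only [map_mul, Units.val_mul] at e3
            have P1 : ¬ (x*y)*x = x*(x*y) := by
              rw [mul_assoc]; exact fun hh => hE (mul_left_cancel hh)
            have P2 : ¬ (x*y)*inv x = x*(x*y) := by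
              rw [mul_assoc]; exact fun hh => hF (mul_left_cancel hh)
            have P6 : ¬ x*(inv y*inv x) = x*(x*y) := fun hh => hH8 (mul_left_cancel hh)
            have P7 : ¬ inv x*(x*y) = x*(x*y) := fun hh => hx (mul_right_cancel hh)
            have P8 : ¬ inv x*(inv y*inv x) = x*(x*y) := by
              rw [← mul_assoc, hD]
              exact P2
            rw [Aux10.sap_neg _ P1, Aux10.sap_neg _ P2, Aux10.sap_pos _ rfl,
                Aux10.sap_neg _ P6, Aux10.sap_neg _ P7, Aux10.sap_neg _ P8] at e3
            have hu1 : (σ x : R) = 1 := by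
              by_cases j1 : (inv y*inv x)*x = x*(x*y)
              · by_cases j2 : (inv y*inv x)*inv x = x*(x*y)
                · exact absurd (mul_left_cancel (j2.trans j1.symm)) hx
                · exfalso
                  rw [Aux10.sap_pos _ j1, Aux10.sap_neg _ j2] at e3
                  exact h2 (by linear_combination e3 + huv)
              · by_cases j2 : (inv y*inv x)*inv x = x*(x*y)
                · rw [Aux10.sap_neg _ j1, Aux10.sap_pos _ j2] at e3
                  linear_combination (-1 : R)*e3 + (σ x : R)*huv
                · exfalso
                  rw [Aux10.sap_neg _ j1, Aux10.sap_neg _ j2] at e3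
                  exact h2 (by linear_combination 2*e3)
            -- equation for pair (x*y, y) at (x*y)*y
            have e4 := Aux10.eq8 inv σ hinv hcompat hanti (x*y) y ((x*y)*y)
            rw [hmul x y] at e4
            simp only [map_mul, Units.val_mul] at e4
            have Q2 : ¬ (x*y)*inv y = (x*y)*y := fun hh => hy (mul_left_cancel hh)
            have Q3 : ¬ (inv y*inv x)*y = (x*y)*y := fun hh => hH8 (mul_right_cancel hh)
            have Q4 : ¬ (inv y*inv x)*inv y = (x*y)*y := by
              intro hh
              have hh2 : (inv y*x)*y = (x*y)*y := by
                calc (inv y*x)*y = inv y*(x*y) := mul_assoc _ _ _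
                _ = inv y*(inv x*inv y) := by rw [hD]
                _ = (inv y*inv x)*inv y := (mul_assoc _ _ _).symm
                _ = (x*y)*y := hh
              exact hG (mul_right_cancel hh2)
            have Q5 : ¬ y*(x*y) = (x*y)*y := by
              intro hh
              rw [← mul_assoc] at hh
              exact hE (mul_right_cancel hh)
            have Q7 : ¬ inv y*(x*y) = (x*y)*y := by
              intro hh
              rw [← mul_assoc] at hh
              exact hG (mul_right_cancel hh)
            rw [Aux10.sap_pos _ rfl, Aux10.sap_neg _ Q2, Aux10.sap_neg _ Q3,
                Aux10.sap_neg _ Q4, Aux10.sap_neg _ Q5, Aux10.sap_neg _ Q7] at e4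
            by_cases k1 : y*(inv y*inv x) = (x*y)*y
            · by_cases k2 : inv y*(inv y*inv x) = (x*y)*y
              · exact hy (mul_right_cancel (k2.trans k1.symm))
              · rw [Aux10.sap_pos _ k1, Aux10.sap_neg _ k2] at e4
                exact h2 (by linear_combination e4 + huv)
            · by_cases k2 : inv y*(inv y*inv x) = (x*y)*y
              · rw [Aux10.sap_neg _ k1, Aux10.sap_pos _ k2] at e4
                have hv1 : (σ y : R) = 1 := by
                  linear_combination (-1 : R)*e4 + (σ y : R)*huv
                rw [hu1, hv1] at huv
                exact h2 (by linear_combination huv)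
              · rw [Aux10.sap_neg _ k1, Aux10.sap_neg _ k2] at e4
                exact h2 (by linear_combination 2*e4)
          · by_cases hH8 : inv y*inv x = x*y
            · -- branch B6 kill
              exfalso
              have hzsym : inv (x*y) = x*y := by rw [hmul x y]; exact hH8
              rw [Aux10.sap_neg _ hD, Aux10.sap_neg _ hE, Aux10.sap_neg _ hF,
                  Aux10.sap_neg _ hG, Aux10.sap_pos _ hH8] at e
              have hσz : (σ (x*y) : R) = -1 := by
                rw [map_mul, Units.val_mul]
                linear_combination e
              have e5 := Aux10.eqZ inv σ hinv hcompat hanti (x*y) x hzsym hσz (x*(x*y))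
              have P1 : ¬ (x*y)*x = x*(x*y) := by
                rw [mul_assoc]; exact fun hh => hE (mul_left_cancel hh)
              have P2 : ¬ (x*y)*inv x = x*(x*y) := by
                rw [mul_assoc]; exact fun hh => hF (mul_left_cancel hh)
              have P4 : ¬ inv x*(x*y) = x*(x*y) := fun hh => hx (mul_right_cancel hh)
              rw [Aux10.sap_neg _ P1, Aux10.sap_neg _ P2, Aux10.sap_pos _ rfl,
                  Aux10.sap_neg _ P4] at e5
              exact h2 (by linear_combination 2*e5)
            · -- all indicators zero : 1 = 0
              exfalso
              rw [Aux10.sap_neg _ hD, Aux10.sap_neg _ hE, Aux10.sap_neg _ hF,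
                  Aux10.sap_neg _ hG, Aux10.sap_neg _ hH8] at e
              exact h2 (by linear_combination 2*e)
  -- assemble the final statement
  obtain ⟨hD, hEF⟩ := key
  have hstar : inv (x*y) = y*x := by
    have h := congrArg inv hD
    rw [hmul (inv x) (inv y), hinv x, hinv y] at h
    exact h.symm
  refine ⟨⟨?_, hD.symm⟩, ?_⟩
  · rcases hEF with hE | hF
    · left
      rw [mul_assoc, ← hE, ← mul_assoc, inv_mul_cancel, one_mul]
    · right
      rw [mul_assoc, ← hF, ← mul_assoc, inv_mul_cancel, one_mul]
  · rw [hstar]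
    exact ⟨fun h => h.symm, fun h => h.symm⟩
end
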